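/- Assume β < 1/2, and let B₂ be any bounded continuous function on ℝ with f_G^{⋆2}(λ) = B₂(λ)|λ|^{2β−1} for almost every λ. Define V_j := Σ_{ℓ=2}^{∞} c_ℓ² ∫_ℝ f_G^{⋆ℓ}(λ) |ψ̂(2^j λ)|² dλ. Then lim_{j→∞} 2^{2jβ} V_j = c₂² · B₂(0) · ∫_ℝ |λ|^{2β−1} |ψ̂(λ)|² dλ. -/

import Mathlib

open MeasureTheory Filter

/-- Convolution of two real functions on ℝ. -/
noncomputable def conv (f g : ℝ → ℝ) (x : ℝ) : ℝ := ∫ y : ℝ, f (x - y) * g y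

/-- ℓ-fold convolution of `f` with itself: `iterConv f 1 = f`,
`iterConv f (ℓ+1) = (iterConv f ℓ) ⋆ f`. Junk value `0` at `ℓ = 0`. -/
noncomputable def iterConv (f : ℝ → ℝ) : ℕ → ℝ → ℝ
  | 0 => fun _ => 0
  | 1 => f
  | (n + 2) => conv (iterConv f (n + 1)) f

/-- Fourier transform `ψ̂(λ) = ∫ e^{-iλt} ψ(t) dt`. -/
noncomputable def fhat (ψ : ℝ → ℝ) (l : ℝ) : ℂ :=
  ∫ t : ℝ, Complex.exp (-(Complex.I * (l : ℂ) * (t : ℂ))) * (ψ t : ℂ)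

lemma measurable_abs_rpow (s : ℝ) : Measurable fun w : ℝ => |w| ^ s := by
  have h : (fun w : ℝ => |w| ^ s)
      = fun w => if w = 0 then (0:ℝ) ^ s else Real.exp (Real.log |w| * s) := by
    funext w
    by_cases hw : w = 0
    · simp [hw]
    · rw [if_neg hw, Real.rpow_def_of_pos (abs_pos.2 hw)]
  rw [h]
  exact Measurable.ite (measurableSet_singleton 0) measurable_const
    (Real.measurable_exp.comp ((Real.measurable_log.comp measurable_abs).mul_const s))

lemma integrable_reflect {f : ℝ → ℝ} {s t : Set ℝ} (hs : MeasurableSet s)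
    (ht : MeasurableSet t) (hf : IntegrableOn f s) (heven : ∀ x, f (-x) = f x)
    (hst : ∀ x, x ∈ t ↔ -x ∈ s) : IntegrableOn f t := by
  have h1 : Integrable (Set.indicator s f) := hf.integrable_indicator hs
  have h2 := h1.comp_neg
  have h3 : (fun x : ℝ => Set.indicator s f (-x)) = Set.indicator t f := by
    funext x
    by_cases hx : x ∈ t
    · rw [Set.indicator_of_mem hx, Set.indicator_of_mem ((hst x).1 hx), heven]
    · rw [Set.indicator_of_notMem hx, Set.indicator_of_notMem (fun h => hx ((hst x).2 h))]
  rw [h3] at h2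
  exact (integrable_indicator_iff ht).1 h2

lemma integrable_exp_neg_abs {b : ℝ} (hb : 0 < b) :
    Integrable fun x : ℝ => Real.exp (-b * |x|) := by
  have h1 : IntegrableOn (fun x : ℝ => Real.exp (-b * |x|)) (Set.Ici 0) := by
    rw [integrableOn_Ici_iff_integrableOn_Ioi]
    exact (exp_neg_integrableOn_Ioi 0 hb).congr_fun
      (fun x hx => by rw [abs_of_pos hx]) measurableSet_Ioi
  have h2 : IntegrableOn (fun x : ℝ => Real.exp (-b * |x|)) (Set.Iic 0) := by
    refine integrable_reflect measurableSet_Ici measurableSet_Iic h1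
      (fun x => by rw [abs_neg]) (fun x => ?_)
    simp
  rw [← integrableOn_univ, ← Set.Iic_union_Ici (a := (0:ℝ))]
  exact h2.union h1

lemma integrableOn_abs_rpow {s : ℝ} (hs : -1 < s) :
    IntegrableOn (fun u : ℝ => |u| ^ s) (Set.Icc (-1 : ℝ) 1) := by
  have h1 : IntegrableOn (fun u : ℝ => |u| ^ s) (Set.Ioc (0:ℝ) 1) := by
    have h := (intervalIntegral.intervalIntegrable_rpow' (a := 0) (b := 1) hs).1
    exact h.congr_fun (fun x hx => by rw [abs_of_pos hx.1]) measurableSet_Ioc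
  have h1' : IntegrableOn (fun u : ℝ => |u| ^ s) (Set.Icc (0:ℝ) 1) := by
    rwa [integrableOn_Icc_iff_integrableOn_Ioc]
  have h2 : IntegrableOn (fun u : ℝ => |u| ^ s) (Set.Icc (-1:ℝ) 0) := by
    refine integrable_reflect measurableSet_Icc measurableSet_Icc h1'
      (fun x => by rw [abs_neg]) (fun x => ?_)
    simp only [Set.mem_Icc]
    constructor <;> intro ⟨u, v⟩ <;> constructor <;> linarith
  have := h2.union h1'
  rwa [Set.Icc_union_Icc_eq_Icc (by norm_num : (-1:ℝ) ≤ 0) (by norm_num : (0:ℝ) ≤ 1)] at this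

lemma conv_nonneg' {f g : ℝ → ℝ} (hf : ∀ x, 0 ≤ f x) (hg : ∀ x, 0 ≤ g x) (x : ℝ) :
    0 ≤ conv f g x :=
  integral_nonneg fun y => mul_nonneg (hf _) (hg _)

lemma conv_eq_convolution (h f : ℝ → ℝ) :
    conv h f = MeasureTheory.convolution f h (ContinuousLinearMap.mul ℝ ℝ) volume := by
  funext x
  simp only [conv, MeasureTheory.convolution, ContinuousLinearMap.mul_apply']
  exact integral_congr_ae (Filter.Eventually.of_forall fun y => mul_comm _ _)

lemma conv_integrable {h f : ℝ → ℝ} (hh : Integrable h) (hf : Integrable f) :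
    Integrable (conv h f) := by
  rw [conv_eq_convolution]
  exact hf.integrable_convolution (ContinuousLinearMap.mul ℝ ℝ) hh

lemma conv_integral {h f : ℝ → ℝ} (hh : Integrable h) (hf : Integrable f) :
    ∫ x, conv h f x = (∫ x, f x) * ∫ x, h x := by
  rw [conv_eq_convolution]
  exact integral_convolution (ContinuousLinearMap.mul ℝ ℝ) hf hh

lemma conv_mul_integral {h f G : ℝ → ℝ} (hh : Integrable h) (hf : Integrable f)
    (hG : Continuous G) (C : ℝ) (hGb : ∀ v, |G v| ≤ C) :
    ∫ v, conv h f v * G v = ∫ z, f z * ∫ v, h v * G (v + z) := by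
  have h1 : Integrable (fun p : ℝ × ℝ => f p.2 * h (p.1 - p.2)) (volume.prod volume) := by
    simpa using hf.convolution_integrand (ContinuousLinearMap.mul ℝ ℝ) hh
  have hprod : Integrable (fun p : ℝ × ℝ => G p.1 * (f p.2 * h (p.1 - p.2)))
      (volume.prod volume) :=
    h1.bdd_mul ((hG.comp continuous_fst).aestronglyMeasurable)
      (Filter.Eventually.of_forall fun p => by simpa [Real.norm_eq_abs] using hGb p.1)
  have hI : Integrable (Function.uncurry fun v z => h (v - z) * f z * G v)
      (volume.prod volume) := by
    refine hprod.congr (Filter.Eventually.of_forall fun p => ?_)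
    simp only [Function.uncurry]
    ring
  have e1 : (fun v => conv h f v * G v) = fun v => ∫ z, h (v - z) * f z * G v := by
    funext v
    simp only [conv]
    rw [← integral_mul_const]
  rw [e1, integral_integral_swap hI]
  refine integral_congr_ae (Filter.Eventually.of_forall fun z => ?_)
  have e2 : ∀ v, h (v - z) * f z * G v = f z * (h (v - z) * G v) := fun v => by ring
  simp_rw [e2]
  rw [integral_const_mul]
  congr 1
  have e3 := MeasureTheory.integral_add_right_eq_self (μ := volume)
      (fun v => h (v - z) * G v) z
  simp only [add_sub_cancel_right] at e3
  rw [← e3]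

set_option maxHeartbeats 1000000 in
theorem stmt_3
    (β : ℝ) (hβ : β ∈ Set.Ioo (0 : ℝ) 1) (hβhalf : β < 1 / 2)
    (C_G : ℝ → ℝ) (hCG_cont : Continuous C_G) (hCG_bdd : ∃ M : ℝ, ∀ x, C_G x ≤ M)
    (hCG_nonneg : ∀ x, 0 ≤ C_G x) (hCG_even : ∀ x, C_G (-x) = C_G x)
    (hCG0 : 0 < C_G 0)
    (f_G : ℝ → ℝ) (hfG_nonneg : ∀ x, 0 ≤ f_G x)
    (hfG : ∀ x : ℝ, x ≠ 0 → f_G x = C_G x * |x| ^ (β - 1))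
    (hfG_int : Integrable f_G) (hfG_one : (∫ l : ℝ, f_G l) = 1)
    (ψ : ℝ → ℝ) (hψ_int : Integrable ψ) (hψ_sq : Integrable (fun t => (ψ t) ^ 2))
    (hψ_zero : (∫ t : ℝ, ψ t) = 0)
    (α K κ : ℝ) (hα : 1 ≤ α) (hK : 0 < K) (hκ : 0 < κ)
    (Cψ : ℝ → ℂ) (hCψ_cont : Continuous Cψ)
    (hCψ0 : 0 < (Cψ 0).re ∧ (Cψ 0).im = 0)
    (hCψ_bdd : ∀ l : ℝ, ‖Cψ l‖ ≤ K * Real.exp (-κ * |l|))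
    (hhat : ∀ l : ℝ, fhat ψ l = Cψ l * ((|l| ^ α : ℝ) : ℂ))
    (c : ℕ → ℝ) (hc : Summable (fun ℓ : ℕ => (c (ℓ + 2)) ^ 2))
    (B₂ : ℝ → ℝ) (hB₂_cont : Continuous B₂) (hB₂_bdd : ∃ M : ℝ, ∀ x, |B₂ x| ≤ M)
    (hB₂ : ∀ᵐ l : ℝ ∂volume, iterConv f_G 2 l = B₂ l * |l| ^ (2 * β - 1))
    (V : ℕ → ℝ)
    (hV : ∀ j : ℕ, V j =
      ∑' ℓ : ℕ, (c (ℓ + 2)) ^ 2 *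
        ∫ l : ℝ, iterConv f_G (ℓ + 2) l * ‖fhat ψ ((2 : ℝ) ^ j * l)‖ ^ 2) :
    Tendsto (fun j : ℕ => (2 : ℝ) ^ (2 * (j : ℝ) * β) * V j) atTop
      (nhds ((c 2) ^ 2 * B₂ 0 *
        ∫ l : ℝ, |l| ^ (2 * β - 1) * ‖fhat ψ l‖ ^ 2)) := by
  obtain ⟨hβ0, hβ1⟩ := hβ
  obtain ⟨MB, hMB⟩ := hB₂_bdd
  have hMB0 : 0 ≤ MB := le_trans (abs_nonneg _) (hMB 0)
  set s : ℝ := 2 * β - 1 with hs_def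
  have hs_neg : s < 0 := by rw [hs_def]; linarith
  have hs_gt : (-1 : ℝ) < s := by rw [hs_def]; linarith
  -- the square of the Fourier transform
  set g0 : ℝ → ℝ := fun w => ‖Cψ w‖ ^ 2 * (|w| ^ α) ^ 2 with hg0_def
  have hg0eq : ∀ w, (‖fhat ψ w‖) ^ 2 = g0 w := by
    intro w
    rw [hhat w, norm_mul, mul_pow, Complex.norm_real, Real.norm_eq_abs,
      abs_of_nonneg (Real.rpow_nonneg (abs_nonneg w) α)]
  have hg0c : Continuous g0 := by
    refine ((continuous_norm.comp hCψ_cont).pow 2).mul ?_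
    exact (continuous_abs.rpow_const fun x => Or.inr (by linarith)).pow 2
  have hg0nn : ∀ w, 0 ≤ g0 w := fun w => by positivity
  have hq : ∀ w : ℝ, (|w| ^ α) ^ 2 = |w| ^ (2 * α) := by
    intro w
    rw [← Real.rpow_natCast (|w| ^ α) 2, ← Real.rpow_mul (abs_nonneg w)]
    norm_num
    congr 1
    ring
  -- the polynomial-exponential bound
  have hpoly : ∀ x : ℝ, 0 ≤ x → x ^ (2*α) * Real.exp (-κ * x) ≤
      1 + (Nat.factorial (Nat.ceil (2*α)) : ℝ) / κ ^ (Nat.ceil (2*α)) := by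
    set n : ℕ := Nat.ceil (2*α) with hn
    intro x hx
    have hfact : (0:ℝ) < (Nat.factorial n : ℝ) := by positivity
    have hκn : (0:ℝ) < κ ^ n := pow_pos hκ n
    have h1 : x ^ (2*α) ≤ 1 + x ^ n := by
      rcases le_total x 1 with hx1 | hx1
      · have h := Real.rpow_le_one hx hx1 (by linarith : (0:ℝ) ≤ 2*α)
        have := pow_nonneg hx n
        linarith
      · have h2 : x ^ (2*α) ≤ x ^ ((n:ℕ):ℝ) :=
          Real.rpow_le_rpow_of_exponent_le hx1 (Nat.le_ceil _)
        rw [Real.rpow_natCast] at h2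
        linarith
    have h3 : x ^ n ≤ (Nat.factorial n : ℝ) * Real.exp (κ * x) / κ ^ n := by
      have h := Real.pow_div_factorial_le_exp (x := κ * x) (mul_nonneg hκ.le hx) n
      rw [mul_pow, div_le_iff₀ hfact] at h
      rw [le_div_iff₀ hκn]
      nlinarith
    have hexple : Real.exp (-κ * x) ≤ 1 := by
      rw [Real.exp_le_one_iff]
      nlinarith
    have hexppos := Real.exp_pos (-κ * x)
    calc x ^ (2*α) * Real.exp (-κ * x) ≤ (1 + x ^ n) * Real.exp (-κ * x) := by
          apply mul_le_mul_of_nonneg_right h1 hexppos.le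
      _ = Real.exp (-κ * x) + x ^ n * Real.exp (-κ * x) := by ring
      _ ≤ 1 + ((Nat.factorial n : ℝ) * Real.exp (κ * x) / κ ^ n) * Real.exp (-κ * x) := by
          gcongr
      _ = 1 + (Nat.factorial n : ℝ) / κ ^ n * (Real.exp (κ * x) * Real.exp (-κ * x)) := by ring
      _ = 1 + (Nat.factorial n : ℝ) / κ ^ n := by
          rw [← Real.exp_add, (by ring : κ * x + -κ * x = 0), Real.exp_zero, mul_one]
  set Cp : ℝ := 1 + (Nat.factorial (Nat.ceil (2*α)) : ℝ) / κ ^ (Nat.ceil (2*α)) with hCp_def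
  have hCp_pos : 0 < Cp := by
    rw [hCp_def]
    positivity
  set Ce : ℝ := K ^ 2 * Cp with hCe_def
  have hCe_pos : 0 < Ce := by rw [hCe_def]; positivity
  have hgexp : ∀ w, g0 w ≤ Ce * Real.exp (-κ * |w|) := by
    intro w
    have h1 : ‖Cψ w‖ ^ 2 ≤ (K * Real.exp (-κ * |w|)) ^ 2 :=
      pow_le_pow_left₀ (norm_nonneg _) (hCψ_bdd w) 2
    have h2 : g0 w ≤ (K * Real.exp (-κ * |w|)) ^ 2 * (|w| ^ α) ^ 2 :=
      mul_le_mul_of_nonneg_right h1 (sq_nonneg _)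
    have h3 : (K * Real.exp (-κ * |w|)) ^ 2 * (|w| ^ α) ^ 2
        = K ^ 2 * (Real.exp (-κ * |w|) * (|w| ^ (2*α) * Real.exp (-κ * |w|))) := by
      rw [hq w, mul_pow, pow_two (Real.exp (-κ * |w|))]
      ring
    have h4 : |w| ^ (2*α) * Real.exp (-κ * |w|) ≤ Cp := hpoly |w| (abs_nonneg w)
    calc g0 w ≤ K ^ 2 * (Real.exp (-κ * |w|) * (|w| ^ (2*α) * Real.exp (-κ * |w|))) := by
          rw [← h3]; exact h2
      _ ≤ K ^ 2 * (Real.exp (-κ * |w|) * Cp) := by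
          have := Real.exp_pos (-κ * |w|)
          gcongr
      _ = Ce * Real.exp (-κ * |w|) := by rw [hCe_def]; ring
  have hexp_le_one : ∀ x : ℝ, Real.exp (-κ * |x|) ≤ 1 := by
    intro x
    rw [Real.exp_le_one_iff]
    have := abs_nonneg x
    nlinarith
  have hgbd : ∀ w, g0 w ≤ Ce := fun w =>
    (hgexp w).trans (by nlinarith [hexp_le_one w])
  have hg0_int : Integrable g0 := by
    refine Integrable.mono' ((integrable_exp_neg_abs hκ).const_mul Ce)
      hg0c.aestronglyMeasurable (Filter.Eventually.of_forall fun w => ?_)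
    rw [Real.norm_eq_abs, abs_of_nonneg (hg0nn w)]
    exact hgexp w
  -- the singular kernel near 0
  set k0 : ℝ → ℝ := Set.indicator (Set.Icc (-1:ℝ) 1) (fun u => |u| ^ s) with hk0_def
  have hk0_int : Integrable k0 := (integrableOn_abs_rpow hs_gt).integrable_indicator
    measurableSet_Icc
  have hk0_nonneg : ∀ u, 0 ≤ k0 u := fun u =>
    Set.indicator_nonneg (fun x _ => Real.rpow_nonneg (abs_nonneg x) s) u
  have hk0_of_le : ∀ u : ℝ, |u| ≤ 1 → k0 u = |u| ^ s := by
    intro u hu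
    rw [hk0_def]
    exact Set.indicator_of_mem (by rcases abs_le.1 hu with ⟨h1, h2⟩; exact Set.mem_Icc.2 ⟨h1, h2⟩) _
  set c₁ : ℝ := ∫ u, k0 u with hc₁_def
  set Ig : ℝ := ∫ w, g0 w with hIg_def
  have hIg_nn : 0 ≤ Ig := integral_nonneg hg0nn
  -- the key kernel integral φ
  set φ : ℝ → ℝ := fun t => ∫ w, |w - t| ^ s * g0 w with hφ_def
  have hφm : ∀ t : ℝ, Measurable fun w : ℝ => |w - t| ^ s * g0 w := fun t =>
    ((measurable_abs_rpow s).comp (measurable_id.sub_const t)).mul hg0c.measurable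
  have hφ_ptbound : ∀ t w : ℝ, |w - t| ^ s * g0 w ≤ Ce * k0 (w - t) + g0 w := by
    intro t w
    rcases le_or_gt |w - t| 1 with h | h
    · have hk : k0 (w - t) = |w - t| ^ s := hk0_of_le _ h
      have h1 : |w - t| ^ s * g0 w ≤ |w - t| ^ s * Ce :=
        mul_le_mul_of_nonneg_left (hgbd w) (Real.rpow_nonneg (abs_nonneg _) s)
      rw [hk]
      have := hg0nn w
      linarith [h1]
    · have h1 : |w - t| ^ s ≤ 1 := Real.rpow_le_one_of_one_le_of_nonpos h.le hs_neg.le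
      have h2 : |w - t| ^ s * g0 w ≤ g0 w := mul_le_of_le_one_left (hg0nn w) h1
      have := mul_nonneg hCe_pos.le (hk0_nonneg (w - t))
      linarith
  have hφ_int : ∀ t : ℝ, Integrable fun w => |w - t| ^ s * g0 w := by
    intro t
    refine Integrable.mono' (((hk0_int.comp_sub_right t).const_mul Ce).add hg0_int)
      (hφm t).aestronglyMeasurable (Filter.Eventually.of_forall fun w => ?_)
    rw [Real.norm_eq_abs,
      abs_of_nonneg (mul_nonneg (Real.rpow_nonneg (abs_nonneg _) s) (hg0nn w))]
    exact hφ_ptbound t w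
  have hφ_nonneg : ∀ t, 0 ≤ φ t := fun t =>
    integral_nonneg fun w => mul_nonneg (Real.rpow_nonneg (abs_nonneg _) s) (hg0nn w)
  set A : ℝ := Ce * c₁ + Ig with hA_def
  have hφ_le : ∀ t, φ t ≤ A := by
    intro t
    have h1 : φ t ≤ ∫ w, Ce * k0 (w - t) + g0 w :=
      integral_mono (hφ_int t) (((hk0_int.comp_sub_right t).const_mul Ce).add hg0_int)
        (hφ_ptbound t)
    have h2 : (∫ w, Ce * k0 (w - t) + g0 w) = Ce * c₁ + Ig := by
      rw [integral_add ((hk0_int.comp_sub_right t).const_mul Ce) hg0_int,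
        integral_const_mul, MeasureTheory.integral_sub_right_eq_self k0 t]
    rw [hA_def]
    linarith [h1, h2.le, h2.ge]
  have hA_nn : 0 ≤ A := le_trans (hφ_nonneg 0) (hφ_le 0)
  -- quantitative decay of φ
  set Ie : ℝ := ∫ w : ℝ, Real.exp (-(κ/2) * |w|) with hIe_def
  have hIe_nn : 0 ≤ Ie := integral_nonneg fun w => (Real.exp_pos _).le
  have hEpt : ∀ t w : ℝ, 2 ≤ |t| → |w - t| ^ s * g0 w ≤
      Ce * (Real.exp κ * Real.exp (-(κ * |t|))) * k0 (w - t)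
      + (|t|/2) ^ s * g0 w
      + Ce * Real.exp (-(κ/4) * |t|) * Real.exp (-(κ/2) * |w|) := by
    intro t w ht
    have ht2 : (0:ℝ) < |t| / 2 := by linarith
    have habssub : |t| - |w| ≤ |w - t| := by
      have := abs_sub_abs_le_abs_sub t w
      rwa [abs_sub_comm t w] at this
    have hterm1nn : 0 ≤ Ce * (Real.exp κ * Real.exp (-(κ * |t|))) * k0 (w - t) := by
      have := hk0_nonneg (w - t); positivity
    have hterm2nn : 0 ≤ (|t|/2) ^ s * g0 w :=
      mul_nonneg (Real.rpow_nonneg ht2.le s) (hg0nn w)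
    have hterm3nn : 0 ≤ Ce * Real.exp (-(κ/4) * |t|) * Real.exp (-(κ/2) * |w|) := by positivity
    rcases le_or_gt |w - t| 1 with h | h
    · -- near the moving singularity
      have hw : |t| - 1 ≤ |w| := by linarith
      have hg : g0 w ≤ Ce * (Real.exp κ * Real.exp (-(κ * |t|))) := by
        have : Real.exp (-κ * |w|) ≤ Real.exp κ * Real.exp (-(κ * |t|)) := by
          rw [← Real.exp_add]
          apply Real.exp_le_exp.2
          have e := mul_le_mul_of_nonneg_left hw hκ.le
          rw [mul_sub, mul_one] at e
          linarith
        calc g0 w ≤ Ce * Real.exp (-κ * |w|) := hgexp w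
          _ ≤ Ce * (Real.exp κ * Real.exp (-(κ * |t|))) :=
              mul_le_mul_of_nonneg_left this hCe_pos.le
      have hk : k0 (w - t) = |w - t| ^ s := hk0_of_le _ h
      have h1 : |w - t| ^ s * g0 w ≤ |w - t| ^ s * (Ce * (Real.exp κ * Real.exp (-(κ * |t|)))) :=
        mul_le_mul_of_nonneg_left hg (Real.rpow_nonneg (abs_nonneg _) s)
      rw [hk] at hterm1nn ⊢
      have h1' : |w - t| ^ s * (Ce * (Real.exp κ * Real.exp (-(κ * |t|))))
          = Ce * (Real.exp κ * Real.exp (-(κ * |t|))) * |w - t| ^ s := mul_comm _ _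
      linarith [h1]
    · have h1 : |w - t| ^ s ≤ 1 := Real.rpow_le_one_of_one_le_of_nonpos h.le hs_neg.le
      rcases le_or_gt (|t|/2) (|w - t|) with h2 | h2
      · -- far from both
        have hss : |w - t| ^ s ≤ (|t|/2) ^ s :=
          Real.rpow_le_rpow_of_nonpos ht2 h2 hs_neg.le
        have : |w - t| ^ s * g0 w ≤ (|t|/2) ^ s * g0 w :=
          mul_le_mul_of_nonneg_right hss (hg0nn w)
        linarith
      · -- w is large
        have hw : |t|/2 ≤ |w| := by linarith
        have hg : g0 w ≤ Ce * Real.exp (-(κ/4) * |t|) * Real.exp (-(κ/2) * |w|) := by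
          refine (hgexp w).trans ?_
          have e1 : Real.exp (-κ * |w|) ≤ Real.exp (-(κ/4) * |t|) * Real.exp (-(κ/2) * |w|) := by
            rw [← Real.exp_add]
            apply Real.exp_le_exp.2
            have e := mul_le_mul_of_nonneg_left hw (half_pos hκ).le
            have e2 : κ/2 * (|t|/2) = κ/4 * |t| := by ring
            linarith
          calc Ce * Real.exp (-κ * |w|)
              ≤ Ce * (Real.exp (-(κ/4) * |t|) * Real.exp (-(κ/2) * |w|)) := by
                exact mul_le_mul_of_nonneg_left e1 hCe_pos.le
            _ = Ce * Real.exp (-(κ/4) * |t|) * Real.exp (-(κ/2) * |w|) := by ring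
        have : |w - t| ^ s * g0 w ≤ g0 w := mul_le_of_le_one_left (hg0nn w) h1
        linarith
  have hEdec : ∀ t : ℝ, 2 ≤ |t| → φ t ≤
      Ce * (Real.exp κ * Real.exp (-(κ * |t|))) * c₁
      + (|t|/2) ^ s * Ig
      + Ce * Real.exp (-(κ/4) * |t|) * Ie := by
    intro t ht
    have I1 : Integrable fun w => Ce * (Real.exp κ * Real.exp (-(κ * |t|))) * k0 (w - t) :=
      (hk0_int.comp_sub_right t).const_mul _
    have I2 : Integrable fun w => (|t|/2) ^ s * g0 w := hg0_int.const_mul _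
    have I3 : Integrable fun w => Ce * Real.exp (-(κ/4) * |t|) * Real.exp (-(κ/2) * |w|) :=
      (integrable_exp_neg_abs (half_pos hκ)).const_mul _
    have h1 : φ t ≤ ∫ w, (Ce * (Real.exp κ * Real.exp (-(κ * |t|))) * k0 (w - t)
        + (|t|/2) ^ s * g0 w
        + Ce * Real.exp (-(κ/4) * |t|) * Real.exp (-(κ/2) * |w|)) :=
      integral_mono (hφ_int t) ((I1.add I2).add I3) (fun w => hEpt t w ht)
    have h2 : (∫ w, (Ce * (Real.exp κ * Real.exp (-(κ * |t|))) * k0 (w - t)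
        + (|t|/2) ^ s * g0 w
        + Ce * Real.exp (-(κ/4) * |t|) * Real.exp (-(κ/2) * |w|)))
        = Ce * (Real.exp κ * Real.exp (-(κ * |t|))) * c₁
          + (|t|/2) ^ s * Ig
          + Ce * Real.exp (-(κ/4) * |t|) * Ie := by
      have I12 : Integrable (fun w => Ce * (Real.exp κ * Real.exp (-(κ * |t|))) * k0 (w - t)
          + (|t|/2) ^ s * g0 w) := I1.add I2
      rw [integral_add I12 I3, integral_add I1 I2, integral_const_mul,
        integral_const_mul, integral_const_mul,
        MeasureTheory.integral_sub_right_eq_self k0 t]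
    linarith [h1, h2.le]
  -- φ along the dyadic scaling goes to 0
  have habs2 : ∀ (j : ℕ) (y : ℝ), |(2:ℝ)^j * y| = (2:ℝ)^j * |y| := fun j y => by
    rw [abs_mul, abs_of_pos (pow_pos two_pos j)]
  have hφ_tend : ∀ y : ℝ, y ≠ 0 → Tendsto (fun j : ℕ => φ ((2:ℝ)^j * y)) atTop (nhds 0) := by
    intro y hy
    have hu : Tendsto (fun j : ℕ => (2:ℝ)^j * |y|) atTop atTop :=
      (tendsto_pow_atTop_atTop_of_one_lt one_lt_two).atTop_mul_const (abs_pos.2 hy)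
    have t1 : Tendsto (fun j : ℕ => Real.exp (-(κ * ((2:ℝ)^j * |y|)))) atTop (nhds 0) :=
      Real.tendsto_exp_atBot.comp (tendsto_neg_atTop_atBot.comp (hu.const_mul_atTop hκ))
    have t3 : Tendsto (fun j : ℕ => Real.exp (-(κ/4 * ((2:ℝ)^j * |y|)))) atTop (nhds 0) :=
      Real.tendsto_exp_atBot.comp (tendsto_neg_atTop_atBot.comp
        (hu.const_mul_atTop (by linarith : (0:ℝ) < κ/4)))
    have t2 : Tendsto (fun j : ℕ => ((2:ℝ)^j * |y| / 2) ^ s) atTop (nhds 0) := by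
      have h := (tendsto_rpow_neg_atTop (by linarith : (0:ℝ) < 1 - 2*β)).comp
        (hu.atTop_div_const two_pos)
      have : -(1 - 2*β) = s := by rw [hs_def]; ring
      rw [this] at h; exact h
    have hE0 : Tendsto (fun j : ℕ =>
        Ce * (Real.exp κ * Real.exp (-(κ * ((2:ℝ)^j * |y|)))) * c₁
        + ((2:ℝ)^j * |y| / 2) ^ s * Ig
        + Ce * Real.exp (-(κ/4 * ((2:ℝ)^j * |y|))) * Ie) atTop (nhds 0) := by
      have S1 : Tendsto (fun j : ℕ =>
          Ce * (Real.exp κ * Real.exp (-(κ * ((2:ℝ)^j * |y|)))) * c₁) atTop (nhds 0) := by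
        simpa using ((t1.const_mul (Real.exp κ)).const_mul Ce).mul_const c₁
      have S2 : Tendsto (fun j : ℕ => ((2:ℝ)^j * |y| / 2) ^ s * Ig) atTop (nhds 0) := by
        simpa using t2.mul_const Ig
      have S3 : Tendsto (fun j : ℕ =>
          Ce * Real.exp (-(κ/4 * ((2:ℝ)^j * |y|))) * Ie) atTop (nhds 0) := by
        simpa using (t3.const_mul Ce).mul_const Ie
      simpa using (S1.add S2).add S3
    refine squeeze_zero' (Filter.Eventually.of_forall fun j => hφ_nonneg _) ?_ hE0
    filter_upwards [hu.eventually_ge_atTop 2] with j hj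
    have habs : |(2:ℝ)^j * y| = (2:ℝ)^j * |y| := habs2 j y
    have := hEdec ((2:ℝ)^j * y) (by rw [habs]; exact hj)
    rw [habs] at this
    convert this using 3 <;> ring
  -- facts about iterated convolutions
  have hICnn : ∀ (ℓ : ℕ) (x : ℝ), 0 ≤ iterConv f_G ℓ x := by
    intro ℓ
    induction ℓ with
    | zero => intro x; simp [iterConv]
    | succ m ih =>
      cases m with
      | zero => intro x; exact hfG_nonneg x
      | succ n => intro x; exact conv_nonneg' ih hfG_nonneg x
  have hIC : ∀ m : ℕ, Integrable (iterConv f_G (m+1)) ∧ (∫ x, iterConv f_G (m+1) x) = 1 := by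
    intro m
    induction m with
    | zero => exact ⟨hfG_int, hfG_one⟩
    | succ m ih =>
      refine ⟨conv_integrable ih.1 hfG_int, ?_⟩
      rw [show iterConv f_G (m+1+1) = conv (iterConv f_G (m+1)) f_G from rfl,
        conv_integral ih.1 hfG_int, hfG_one, ih.2, one_mul]
  -- the rescaled spectral functionals
  set W : ℕ → ℕ → ℝ → ℝ :=
    fun j ℓ y => ∫ v, iterConv f_G ℓ v * g0 ((2:ℝ)^j * (v + y)) with hW_def
  have hWnn : ∀ j ℓ y, 0 ≤ W j ℓ y := fun j ℓ y =>
    integral_nonneg fun v => mul_nonneg (hICnn ℓ v) (hg0nn _)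
  have hWcont : ∀ (j m : ℕ), Continuous fun y => W j (m+1) y := by
    intro j m
    rw [hW_def]
    refine continuous_of_dominated (bound := fun v => iterConv f_G (m+1) v * Ce) ?_ ?_ ?_ ?_
    · intro y
      exact (hIC m).1.aestronglyMeasurable.mul
        ((hg0c.comp (continuous_const.mul (continuous_id.add continuous_const))).aestronglyMeasurable)
    · intro y
      refine Filter.Eventually.of_forall fun v => ?_
      rw [Real.norm_eq_abs, abs_of_nonneg (mul_nonneg (hICnn _ v) (hg0nn _))]
      exact mul_le_mul_of_nonneg_left (hgbd _) (hICnn _ v)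
    · exact (hIC m).1.mul_const Ce
    · exact Filter.Eventually.of_forall fun v =>
        continuous_const.mul (hg0c.comp (continuous_const.mul (continuous_const.add continuous_id)))
  have hpj : ∀ j : ℕ, (0:ℝ) < (2:ℝ)^j := fun j => pow_pos two_pos j
  have haeq : ∀ j : ℕ, (2:ℝ)^(2*(j:ℝ)*β) = ((2:ℝ)^j) ^ (2*β) := by
    intro j
    rw [← Real.rpow_natCast (2:ℝ) j, ← Real.rpow_mul (by norm_num : (0:ℝ) ≤ 2)]
    congr 1
    ring
  have hscale : ∀ j : ℕ, (2:ℝ)^(2*(j:ℝ)*β) * ((((2:ℝ)^j)⁻¹) * (((2:ℝ)^j)⁻¹) ^ s) = 1 := by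
    intro j
    have hp := hpj j
    rw [haeq j, Real.inv_rpow hp.le, ← mul_inv]
    have key : (2:ℝ)^j * ((2:ℝ)^j) ^ s = ((2:ℝ)^j) ^ (2*β) := by
      nth_rewrite 1 [← Real.rpow_one ((2:ℝ)^j)]
      rw [← Real.rpow_add hp]
      congr 1
      rw [hs_def]; ring
    rw [key]
    exact mul_inv_cancel₀ (Real.rpow_pos_of_pos hp _).ne'
  have hchange : ∀ (j : ℕ) (y : ℝ), (∫ v, |v| ^ s * g0 ((2:ℝ)^j * (v + y)))
      = (((2:ℝ)^j)⁻¹ * (((2:ℝ)^j)⁻¹) ^ s) * φ ((2:ℝ)^j * y) := by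
    intro j y
    have hp := hpj j
    have e1 : (∫ v, |v| ^ s * g0 ((2:ℝ)^j * (v + y)))
        = ∫ x, |x - y| ^ s * g0 ((2:ℝ)^j * x) := by
      have h := MeasureTheory.integral_add_right_eq_self (μ := volume)
        (fun x => |x - y| ^ s * g0 ((2:ℝ)^j * x)) y
      rw [← h]
      congr 1
      funext v
      rw [add_sub_cancel_right]
    have e2 : (∫ x, |x - y| ^ s * g0 ((2:ℝ)^j * x))
        = ((2:ℝ)^j)⁻¹ * ∫ w, |((2:ℝ)^j)⁻¹ * w - y| ^ s * g0 w := by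
      have h := MeasureTheory.Measure.integral_comp_mul_left
        (fun w => |((2:ℝ)^j)⁻¹ * w - y| ^ s * g0 w) ((2:ℝ)^j)
      simp only [inv_mul_cancel_left₀ hp.ne'] at h
      rw [h, smul_eq_mul, abs_of_pos (inv_pos.2 hp)]
    have e3 : (∫ w, |((2:ℝ)^j)⁻¹ * w - y| ^ s * g0 w)
        = (((2:ℝ)^j)⁻¹) ^ s * φ ((2:ℝ)^j * y) := by
      rw [hφ_def, ← integral_const_mul]
      congr 1
      funext w
      have e : ((2:ℝ)^j)⁻¹ * w - y = ((2:ℝ)^j)⁻¹ * (w - (2:ℝ)^j * y) := by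
        field_simp
      rw [e, abs_mul, abs_of_pos (inv_pos.2 hp),
        Real.mul_rpow (inv_pos.2 hp).le (abs_nonneg _), mul_assoc]
    rw [e1, e2, e3]
    ring
  have hW2bd : ∀ (j : ℕ) (y : ℝ), W j 2 y
      ≤ MB * ((((2:ℝ)^j)⁻¹ * (((2:ℝ)^j)⁻¹) ^ s) * φ ((2:ℝ)^j * y)) := by
    intro j y
    have hp := hpj j
    have hmaj : Integrable fun v => |v| ^ s * g0 ((2:ℝ)^j * (v + y)) := by
      have base := hφ_int ((2:ℝ)^j * y)
      have step2 : Integrable fun v : ℝ =>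
          |(2:ℝ)^j * (v + y) - (2:ℝ)^j * y| ^ s * g0 ((2:ℝ)^j * (v + y)) :=
        (base.comp_mul_left' hp.ne').comp_add_right y
      have step3 := step2.const_mul ((((2:ℝ)^j) ^ s)⁻¹)
      refine step3.congr (Filter.Eventually.of_forall fun v => ?_)
      show (((2:ℝ)^j) ^ s)⁻¹ * (|(2:ℝ)^j * (v + y) - (2:ℝ)^j * y| ^ s
        * g0 ((2:ℝ)^j * (v + y))) = |v| ^ s * g0 ((2:ℝ)^j * (v + y))
      have e : (2:ℝ)^j * (v + y) - (2:ℝ)^j * y = (2:ℝ)^j * v := by ring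
      rw [e, abs_mul, abs_of_pos hp, Real.mul_rpow hp.le (abs_nonneg _)]
      have hps : ((2:ℝ)^j) ^ s ≠ 0 := (Real.rpow_pos_of_pos hp s).ne'
      field_simp
    have hmono : W j 2 y ≤ ∫ v, MB * (|v| ^ s * g0 ((2:ℝ)^j * (v + y))) := by
      rw [hW_def]
      refine integral_mono_of_nonneg (Filter.Eventually.of_forall fun v =>
        mul_nonneg (hICnn 2 v) (hg0nn _)) (hmaj.const_mul MB) ?_
      filter_upwards [hB₂] with v hv
      rw [hv]
      have h1 : B₂ v * |v| ^ s ≤ MB * |v| ^ s :=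
        mul_le_mul_of_nonneg_right (le_trans (le_abs_self _) (hMB v))
          (Real.rpow_nonneg (abs_nonneg v) _)
      calc B₂ v * |v| ^ s * g0 ((2:ℝ)^j * (v + y))
          ≤ MB * |v| ^ s * g0 ((2:ℝ)^j * (v + y)) :=
            mul_le_mul_of_nonneg_right h1 (hg0nn _)
        _ = MB * (|v| ^ s * g0 ((2:ℝ)^j * (v + y))) := by ring
    calc W j 2 y ≤ ∫ v, MB * (|v| ^ s * g0 ((2:ℝ)^j * (v + y))) := hmono
      _ = MB * ∫ v, |v| ^ s * g0 ((2:ℝ)^j * (v + y)) := integral_const_mul MB _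
      _ = MB * ((((2:ℝ)^j)⁻¹ * (((2:ℝ)^j)⁻¹) ^ s) * φ ((2:ℝ)^j * y)) := by rw [hchange j y]
  have apos : ∀ j : ℕ, (0:ℝ) < (2:ℝ)^(2*(j:ℝ)*β) := fun j =>
    Real.rpow_pos_of_pos two_pos _
  -- the recursion formula
  have hrec : ∀ (j m : ℕ) (y : ℝ), W j (m+2) y = ∫ z, f_G z * W j (m+1) (y + z) := by
    intro j m y
    have hGc : Continuous fun v => g0 ((2:ℝ)^j * (v + y)) :=
      hg0c.comp (continuous_const.mul (continuous_id.add continuous_const))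
    have hGb : ∀ v, |g0 ((2:ℝ)^j * (v + y))| ≤ Ce := fun v => by
      rw [abs_of_nonneg (hg0nn _)]; exact hgbd _
    have h := conv_mul_integral (hIC m).1 hfG_int hGc Ce hGb
    rw [hW_def]
    show (∫ v, iterConv f_G (m+2) v * g0 ((2:ℝ)^j * (v + y)))
      = ∫ z, f_G z * ∫ v, iterConv f_G (m+1) v * g0 ((2:ℝ)^j * (v + (y + z)))
    rw [show iterConv f_G (m+2) = conv (iterConv f_G (m+1)) f_G from rfl]
    rw [h]
    refine integral_congr_ae (Filter.Eventually.of_forall fun z => ?_)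
    show f_G z * (∫ v, iterConv f_G (m+1) v * g0 ((2:ℝ)^j * (v + z + y)))
      = f_G z * ∫ v, iterConv f_G (m+1) v * g0 ((2:ℝ)^j * (v + (y + z)))
    congr 1
    refine integral_congr_ae (Filter.Eventually.of_forall fun v => ?_)
    show iterConv f_G (m+1) v * g0 ((2:ℝ)^j * (v + z + y))
      = iterConv f_G (m+1) v * g0 ((2:ℝ)^j * (v + (y + z)))
    rw [show v + z + y = v + (y + z) from by ring]
  -- uniform bound
  have hWbd : ∀ (m j : ℕ) (y : ℝ), W j (m+2) y
      ≤ (((2:ℝ)^j)⁻¹ * (((2:ℝ)^j)⁻¹) ^ s) * (MB * A) := by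
    intro m
    induction m with
    | zero =>
      intro j y
      refine (hW2bd j y).trans ?_
      have hQnn : (0:ℝ) ≤ ((2:ℝ)^j)⁻¹ * (((2:ℝ)^j)⁻¹) ^ s :=
        mul_nonneg (inv_nonneg.2 (hpj j).le) (Real.rpow_nonneg (inv_nonneg.2 (hpj j).le) s)
      have h1 : MB * φ ((2:ℝ)^j * y) ≤ MB * A :=
        mul_le_mul_of_nonneg_left (hφ_le _) hMB0
      calc MB * ((((2:ℝ)^j)⁻¹ * (((2:ℝ)^j)⁻¹) ^ s) * φ ((2:ℝ)^j * y))
          = (((2:ℝ)^j)⁻¹ * (((2:ℝ)^j)⁻¹) ^ s) * (MB * φ ((2:ℝ)^j * y)) := by ring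
        _ ≤ (((2:ℝ)^j)⁻¹ * (((2:ℝ)^j)⁻¹) ^ s) * (MB * A) :=
            mul_le_mul_of_nonneg_left h1 hQnn
    | succ m ih =>
      intro j y
      rw [hrec j (m+1) y]
      have hint : Integrable fun z => f_G z *
          ((((2:ℝ)^j)⁻¹ * (((2:ℝ)^j)⁻¹) ^ s) * (MB * A)) := hfG_int.mul_const _
      refine le_trans (integral_mono_of_nonneg (Filter.Eventually.of_forall fun z =>
        mul_nonneg (hfG_nonneg z) (hWnn _ _ _)) hint
        (Filter.Eventually.of_forall fun z =>
          mul_le_mul_of_nonneg_left (ih j (y+z)) (hfG_nonneg z))) ?_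
      rw [integral_mul_const, hfG_one, one_mul]
  have haWbd : ∀ (m j : ℕ) (y : ℝ), (2:ℝ)^(2*(j:ℝ)*β) * W j (m+2) y ≤ MB * A := by
    intro m j y
    have h1 := mul_le_mul_of_nonneg_left (hWbd m j y) (apos j).le
    calc (2:ℝ)^(2*(j:ℝ)*β) * W j (m+2) y
        ≤ (2:ℝ)^(2*(j:ℝ)*β) * ((((2:ℝ)^j)⁻¹ * (((2:ℝ)^j)⁻¹) ^ s) * (MB * A)) := h1
      _ = ((2:ℝ)^(2*(j:ℝ)*β) * (((2:ℝ)^j)⁻¹ * (((2:ℝ)^j)⁻¹) ^ s)) * (MB * A) := by ring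
      _ = MB * A := by rw [hscale j, one_mul]
  -- decay for ℓ ≥ 3 (and for ℓ = 2 away from 0)
  have hWdec : ∀ (m : ℕ) (y : ℝ), (y ≠ 0 ∨ m ≠ 0) →
      Tendsto (fun j : ℕ => (2:ℝ)^(2*(j:ℝ)*β) * W j (m+2) y) atTop (nhds 0) := by
    intro m
    induction m with
    | zero =>
      rintro y (hy | h0)
      · refine squeeze_zero' (g := fun j => MB * φ ((2:ℝ)^j * y))
          (Filter.Eventually.of_forall fun j =>
          mul_nonneg (apos j).le (hWnn _ _ _)) (Filter.Eventually.of_forall fun j => ?_) ?_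
        · have h1 := mul_le_mul_of_nonneg_left (hW2bd j y) (apos j).le
          calc (2:ℝ)^(2*(j:ℝ)*β) * W j 2 y
              ≤ (2:ℝ)^(2*(j:ℝ)*β) * (MB * ((((2:ℝ)^j)⁻¹ * (((2:ℝ)^j)⁻¹) ^ s)
                * φ ((2:ℝ)^j * y))) := h1
            _ = ((2:ℝ)^(2*(j:ℝ)*β) * (((2:ℝ)^j)⁻¹ * (((2:ℝ)^j)⁻¹) ^ s))
                * (MB * φ ((2:ℝ)^j * y)) := by ring
            _ = MB * φ ((2:ℝ)^j * y) := by rw [hscale j, one_mul]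
        · simpa using (hφ_tend y hy).const_mul MB
      · exact absurd rfl h0
    | succ m ih =>
      intro y _
      have hz : ∀ᵐ z : ℝ ∂volume, z ≠ -y := by
        refine (ae_iff).2 ?_
        have he : {z : ℝ | ¬ z ≠ -y} = {-y} := by ext z; simp
        rw [he]
        exact measure_singleton _
      have hrw : (fun j : ℕ => (2:ℝ)^(2*(j:ℝ)*β) * W j (m+1+2) y)
          = fun j : ℕ => ∫ z, f_G z * ((2:ℝ)^(2*(j:ℝ)*β) * W j (m+2) (y+z)) := by
        funext j
        rw [hrec j (m+1) y, ← integral_const_mul]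
        refine integral_congr_ae (Filter.Eventually.of_forall fun z => ?_)
        ring
      rw [hrw]
      have hlim0 : Tendsto (fun j : ℕ => ∫ z, f_G z *
          ((2:ℝ)^(2*(j:ℝ)*β) * W j (m+2) (y+z))) atTop (nhds (∫ z, f_G z * 0)) := by
        refine tendsto_integral_of_dominated_convergence
          (bound := fun z => f_G z * (MB * A)) ?_ (hfG_int.mul_const _) ?_ ?_
        · intro j
          exact hfG_int.aestronglyMeasurable.mul
            ((continuous_const.mul ((hWcont j (m+1)).comp
              (continuous_const.add continuous_id))).aestronglyMeasurable)
        · intro j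
          refine Filter.Eventually.of_forall fun z => ?_
          rw [Real.norm_eq_abs, abs_of_nonneg (mul_nonneg (hfG_nonneg z)
            (mul_nonneg (apos j).le (hWnn _ _ _)))]
          exact mul_le_mul_of_nonneg_left (haWbd m j (y+z)) (hfG_nonneg z)
        · filter_upwards [hz] with z hzz
          have hyz : y + z ≠ 0 ∨ m ≠ 0 := Or.inl (fun h => hzz (by linarith))
          exact (ih (y+z) hyz).const_mul (f_G z)
      simpa using hlim0
  -- the main term
  have hmain : ∀ j : ℕ, (2:ℝ)^(2*(j:ℝ)*β) * W j 2 0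
      = ∫ w, B₂ (((2:ℝ)^j)⁻¹ * w) * (|w| ^ s * g0 w) := by
    intro j
    have hp := hpj j
    have e0 : W j 2 0 = ∫ v, iterConv f_G 2 v * g0 ((2:ℝ)^j * v) := by
      rw [hW_def]
      refine integral_congr_ae (Filter.Eventually.of_forall fun v => ?_)
      show iterConv f_G 2 v * g0 ((2:ℝ)^j * (v + 0)) = iterConv f_G 2 v * g0 ((2:ℝ)^j * v)
      rw [add_zero]
    have e1 : (∫ v, iterConv f_G 2 v * g0 ((2:ℝ)^j * v))
        = ∫ v, B₂ v * |v| ^ s * g0 ((2:ℝ)^j * v) := by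
      refine integral_congr_ae ?_
      filter_upwards [hB₂] with v hv
      rw [hv]
    have e2 : (∫ v, B₂ v * |v| ^ s * g0 ((2:ℝ)^j * v))
        = ((2:ℝ)^j)⁻¹ * ∫ w, B₂ (((2:ℝ)^j)⁻¹ * w) * |((2:ℝ)^j)⁻¹ * w| ^ s * g0 w := by
      have h := MeasureTheory.Measure.integral_comp_mul_left
        (fun w => B₂ (((2:ℝ)^j)⁻¹ * w) * |((2:ℝ)^j)⁻¹ * w| ^ s * g0 w) ((2:ℝ)^j)
      simp only [inv_mul_cancel_left₀ hp.ne'] at h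
      rw [h, smul_eq_mul, abs_of_pos (inv_pos.2 hp)]
    have e3 : (∫ w, B₂ (((2:ℝ)^j)⁻¹ * w) * |((2:ℝ)^j)⁻¹ * w| ^ s * g0 w)
        = (((2:ℝ)^j)⁻¹) ^ s * ∫ w, B₂ (((2:ℝ)^j)⁻¹ * w) * (|w| ^ s * g0 w) := by
      rw [← integral_const_mul]
      refine integral_congr_ae (Filter.Eventually.of_forall fun w => ?_)
      show B₂ (((2:ℝ)^j)⁻¹ * w) * |((2:ℝ)^j)⁻¹ * w| ^ s * g0 w
        = (((2:ℝ)^j)⁻¹) ^ s * (B₂ (((2:ℝ)^j)⁻¹ * w) * (|w| ^ s * g0 w))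
      rw [abs_mul, abs_of_pos (inv_pos.2 hp), Real.mul_rpow (inv_pos.2 hp).le (abs_nonneg _)]
      ring
    rw [e0, e1, e2, e3]
    calc (2:ℝ)^(2*(j:ℝ)*β) * (((2:ℝ)^j)⁻¹ * ((((2:ℝ)^j)⁻¹) ^ s
          * ∫ w, B₂ (((2:ℝ)^j)⁻¹ * w) * (|w| ^ s * g0 w)))
        = ((2:ℝ)^(2*(j:ℝ)*β) * (((2:ℝ)^j)⁻¹ * (((2:ℝ)^j)⁻¹) ^ s))
          * ∫ w, B₂ (((2:ℝ)^j)⁻¹ * w) * (|w| ^ s * g0 w) := by ring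
      _ = ∫ w, B₂ (((2:ℝ)^j)⁻¹ * w) * (|w| ^ s * g0 w) := by rw [hscale j, one_mul]
  have hφ0 : Integrable fun w : ℝ => |w| ^ s * g0 w := by
    have h := hφ_int 0
    simpa using h
  have hmainlim : Tendsto (fun j : ℕ => ∫ w, B₂ (((2:ℝ)^j)⁻¹ * w) * (|w| ^ s * g0 w)) atTop
      (nhds (∫ w, B₂ 0 * (|w| ^ s * g0 w))) := by
    refine tendsto_integral_of_dominated_convergence
      (bound := fun w => MB * (|w| ^ s * g0 w)) ?_ (hφ0.const_mul MB) ?_ ?_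
    · intro j
      exact (hB₂_cont.comp (continuous_const.mul continuous_id)).aestronglyMeasurable.mul
        ((measurable_abs_rpow s).mul hg0c.measurable).aestronglyMeasurable
    · intro j
      refine Filter.Eventually.of_forall fun w => ?_
      have hnn : 0 ≤ |w| ^ s * g0 w :=
        mul_nonneg (Real.rpow_nonneg (abs_nonneg w) s) (hg0nn w)
      rw [Real.norm_eq_abs, abs_mul, abs_of_nonneg hnn]
      exact mul_le_mul_of_nonneg_right (hMB _) hnn
    · refine Filter.Eventually.of_forall fun w => ?_
      refine Tendsto.mul_const _ ?_
      have hb : Tendsto (fun j : ℕ => ((2:ℝ)^j)⁻¹ * w) atTop (nhds 0) := by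
        have h1 : Tendsto (fun j : ℕ => ((2:ℝ)⁻¹)^j) atTop (nhds 0) :=
          tendsto_pow_atTop_nhds_zero_of_lt_one (by norm_num) (by norm_num)
        have h2 := h1.mul_const w
        simpa [inv_pow] using h2
      exact (hB₂_cont.tendsto 0).comp hb
  -- assembling the series
  have hVW : ∀ j : ℕ, (2:ℝ)^(2*(j:ℝ)*β) * V j
      = ∑' ℓ : ℕ, (c (ℓ+2))^2 * ((2:ℝ)^(2*(j:ℝ)*β) * W j (ℓ+2) 0) := by
    intro j
    rw [hV j, ← tsum_mul_left]
    refine tsum_congr fun ℓ => ?_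
    have he : (∫ l, iterConv f_G (ℓ+2) l * ‖fhat ψ ((2:ℝ)^j * l)‖^2)
        = W j (ℓ+2) 0 := by
      rw [hW_def]
      refine integral_congr_ae (Filter.Eventually.of_forall fun l => ?_)
      show iterConv f_G (ℓ+2) l * ‖fhat ψ ((2:ℝ)^j * l)‖^2
        = iterConv f_G (ℓ+2) l * g0 ((2:ℝ)^j * (l + 0))
      rw [hg0eq, add_zero]
    rw [he]
    ring
  have hfinal := tendsto_tsum_of_dominated_convergence (𝓕 := atTop)
    (f := fun (j : ℕ) (ℓ : ℕ) => (c (ℓ+2))^2 * ((2:ℝ)^(2*(j:ℝ)*β) * W j (ℓ+2) 0))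
    (g := fun ℓ : ℕ => if ℓ = 0 then (c 2)^2 * (B₂ 0 * ∫ w, |w| ^ s * g0 w) else 0)
    (bound := fun ℓ : ℕ => (c (ℓ+2))^2 * (MB * A))
    (hc.mul_right _) ?_ ?_
  · -- conclude
    have htsum : (∑' ℓ : ℕ, (if ℓ = 0 then (c 2)^2 * (B₂ 0 * ∫ w, |w| ^ s * g0 w) else 0))
        = (c 2)^2 * (B₂ 0 * ∫ w, |w| ^ s * g0 w) := by
      rw [tsum_eq_single 0 (fun b hb => if_neg hb)]
      simp
    rw [htsum] at hfinal
    have hgoalint : (∫ l : ℝ, |l| ^ s * ‖fhat ψ l‖ ^ 2)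
        = ∫ w, |w| ^ s * g0 w :=
      integral_congr_ae (Filter.Eventually.of_forall fun l => by
        show |l| ^ s * ‖fhat ψ l‖ ^ 2 = |l| ^ s * g0 l
        rw [hg0eq])
    rw [show (fun j : ℕ => (2:ℝ)^(2*(j:ℝ)*β) * V j)
      = fun j : ℕ => ∑' ℓ : ℕ, (c (ℓ+2))^2 * ((2:ℝ)^(2*(j:ℝ)*β) * W j (ℓ+2) 0)
      from funext hVW, hgoalint]
    convert hfinal using 2
    ring
  · -- termwise limits
    intro ℓ
    cases ℓ with
    | zero =>
      simp only [if_pos]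
      have h1 : Tendsto (fun j : ℕ => (2:ℝ)^(2*(j:ℝ)*β) * W j 2 0) atTop
          (nhds (B₂ 0 * ∫ w, |w| ^ s * g0 w)) := by
        rw [show (fun j : ℕ => (2:ℝ)^(2*(j:ℝ)*β) * W j 2 0)
          = fun j : ℕ => ∫ w, B₂ (((2:ℝ)^j)⁻¹ * w) * (|w| ^ s * g0 w) from funext hmain]
        rwa [integral_const_mul] at hmainlim
      exact h1.const_mul _
    | succ k =>
      simp only [Nat.succ_ne_zero, if_neg]
      simpa using (hWdec (k+1) 0 (Or.inr (Nat.succ_ne_zero k))).const_mul ((c (k+1+2))^2)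
  · -- uniform domination
    refine Filter.Eventually.of_forall fun j => fun ℓ => ?_
    have hnn : 0 ≤ (2:ℝ)^(2*(j:ℝ)*β) * W j (ℓ+2) 0 := mul_nonneg (apos j).le (hWnn _ _ _)
    rw [Real.norm_eq_abs, abs_mul, abs_of_nonneg hnn, abs_of_nonneg (sq_nonneg _)]
    exact mul_le_mul_of_nonneg_left (haWbd ℓ j 0) (sq_nonneg _)
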